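/- Let c ∈ ℂˣ with c ≠ 1. The intersection in PGL₃(ℂ) of the centralizers of [A] and [B], where A = [[0,1,0],[1,0,0],[0,0,c]] and B = [[−1,0,0],[0,1,0],[0,0,c]], equals the image of { diag(x, x, y) : x, y ∈ ℂˣ } in PGL₃(ℂ); in particular it is connected and the associated component group is trivial. -/

import Mathlib

open Matrix

/-- Auxiliary: the diagonal matrix `diag(x,x,y)` as an element of `GL₃(ℂ)`. -/
noncomputable def diagGL14 (x y : ℂ) (hx : x ≠ 0) (hy : y ≠ 0) : GL (Fin 3) ℂ where
  val := Matrix.diagonal ![x, x, y]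
  inv := Matrix.diagonal ![x⁻¹, x⁻¹, y⁻¹]
  val_inv := by
    ext i j
    fin_cases i <;> fin_cases j <;>
      simp [Matrix.mul_apply, Fin.sum_univ_three, Matrix.diagonal, Matrix.one_apply,
        mul_inv_cancel₀ hx, mul_inv_cancel₀ hy]
  inv_val := by
    ext i j
    fin_cases i <;> fin_cases j <;>
      simp [Matrix.mul_apply, Fin.sum_univ_three, Matrix.diagonal, Matrix.one_apply,
        inv_mul_cancel₀ hx, inv_mul_cancel₀ hy]

lemma key14 (c r s : ℂ) (hc : c ≠ 0) (hc1 : c ≠ 1) (m : Matrix (Fin 3) (Fin 3) ℂ)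
    (hdet : m.det ≠ 0)
    (h1 : m * !![0,1,0;1,0,0;0,0,c] = r • (!![0,1,0;1,0,0;0,0,c] * m))
    (h2 : m * !![-1,0,0;0,1,0;0,0,c] = s • (!![-1,0,0;0,1,0;0,0,c] * m)) :
    ∃ x y : ℂ, x ≠ 0 ∧ y ≠ 0 ∧ m = Matrix.diagonal ![x, x, y] := by
  rw [Matrix.det_fin_three] at hdet
  have a00 := congrFun (congrFun h1 0) 0
  have a01 := congrFun (congrFun h1 0) 1
  have a02 := congrFun (congrFun h1 0) 2
  have a10 := congrFun (congrFun h1 1) 0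
  have a12 := congrFun (congrFun h1 1) 2
  have a21 := congrFun (congrFun h1 2) 1
  have a22 := congrFun (congrFun h1 2) 2
  have b00 := congrFun (congrFun h2 0) 0
  have b01 := congrFun (congrFun h2 0) 1
  have b02 := congrFun (congrFun h2 0) 2
  have b10 := congrFun (congrFun h2 1) 0
  have b11 := congrFun (congrFun h2 1) 1
  have b12 := congrFun (congrFun h2 1) 2
  have b20 := congrFun (congrFun h2 2) 0
  have b21 := congrFun (congrFun h2 2) 1
  have b22 := congrFun (congrFun h2 2) 2
  simp only [Matrix.mul_apply, Fin.sum_univ_three, Matrix.smul_apply, smul_eq_mul] at a00 a01 a02 a10 a12 a21 a22 b00 b01 b02 b10 b11 b12 b20 b21 b22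
  simp [Matrix.vecHead, Matrix.vecTail] at a00 a01 a02 a10 a12 a21 a22 b00 b01 b02 b10 b11 b12 b20 b21 b22
  have hr : r ≠ 0 := by
    rintro rfl
    have e1 : m 0 1 = 0 := by simpa using a00
    have e0 : m 0 0 = 0 := by simpa using a01
    have e2 : m 0 2 = 0 := (show m 0 2 = 0 ∨ c = 0 by simpa using a02).resolve_right hc
    exact hdet (by rw [e0, e1, e2]; ring)
  rcases eq_or_ne s 1 with rfl | hs
  · -- s = 1
    have hm01 : m 0 1 = 0 := by linear_combination (1/2 : ℂ) * b01
    have hm10 : m 1 0 = 0 := by linear_combination (-(1/2) : ℂ) * b10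
    have hm12 : m 1 2 = 0 := by
      rcases mul_eq_zero.mp (show m 1 2 * (c - 1) = 0 by linear_combination b12) with h | h
      · exact h
      · exact absurd (by linear_combination h) hc1
    have hm21 : m 2 1 = 0 := by
      rcases mul_eq_zero.mp (show m 2 1 * (1 - c) = 0 by linear_combination b21) with h | h
      · exact h
      · exact absurd (by linear_combination -h) hc1
    have hm02 : m 0 2 = 0 := by
      rcases mul_eq_zero.mp (show m 0 2 * c = 0 by rw [a02, hm12]; ring) with h | h
      · exact h
      · exact absurd h hc
    have hm20 : m 2 0 = 0 := by rw [a21, hm21]; ring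
    have hm22 : m 2 2 ≠ 0 := fun h => hdet (by rw [hm01, hm02, hm10, hm12, hm20, hm21, h]; ring)
    have hm00 : m 0 0 ≠ 0 := fun h => hdet (by rw [hm01, hm02, hm10, hm12, hm20, hm21, h]; ring)
    have hr1 : r = 1 := by
      rcases mul_eq_zero.mp (show (r - 1) * (c * m 2 2) = 0 by linear_combination -a22) with h | h
      · linear_combination h
      · exact absurd h (mul_ne_zero hc hm22)
    have hm1100 : m 1 1 = m 0 0 := by rw [a10, hr1]; ring
    refine ⟨m 0 0, m 2 2, hm00, hm22, ?_⟩
    ext i j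
    fin_cases i <;> fin_cases j <;>
      simp [Matrix.diagonal_apply, hm01, hm02, hm10, hm12, hm20, hm21, hm1100]
  · -- s ≠ 1
    have h1s : (1 : ℂ) - s ≠ 0 := fun h => hs (by linear_combination -h)
    have hm00 : m 0 0 = 0 := by
      rcases mul_eq_zero.mp (show m 0 0 * (1 - s) = 0 by linear_combination b00) with h | h
      · exact h
      · exact absurd h h1s
    have hm11 : m 1 1 = 0 := by
      rcases mul_eq_zero.mp (show m 1 1 * (1 - s) = 0 by linear_combination b11) with h | h
      · exact h
      · exact absurd h h1s
    have hm22 : m 2 2 = 0 := by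
      rcases mul_eq_zero.mp (show m 2 2 * (c * (1 - s)) = 0 by linear_combination b22) with h | h
      · exact h
      · exact absurd h (mul_ne_zero hc h1s)
    rcases eq_or_ne s (-1) with rfl | hs2
    · have hm02 : m 0 2 = 0 := by
        rcases mul_eq_zero.mp (show m 0 2 * (c - 1) = 0 by linear_combination b02) with h | h
        · exact h
        · exact absurd (by linear_combination h) hc1
      have hm20 : m 2 0 = 0 := by
        rcases mul_eq_zero.mp (show m 2 0 * (c - 1) = 0 by linear_combination b20) with h | h
        · exact h
        · exact absurd (by linear_combination h) hc1
      exact absurd (by rw [hm00, hm02, hm11, hm20, hm22]; ring) hdet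
    · have h2s : (1 : ℂ) + s ≠ 0 := fun h => hs2 (by linear_combination h)
      have hm01 : m 0 1 = 0 := by
        rcases mul_eq_zero.mp (show m 0 1 * (1 + s) = 0 by linear_combination b01) with h | h
        · exact h
        · exact absurd h h2s
      have hm10 : m 1 0 = 0 := by
        rcases mul_eq_zero.mp (show m 1 0 * (1 + s) = 0 by linear_combination -b10) with h | h
        · exact h
        · exact absurd h h2s
      exact absurd (by rw [hm00, hm01, hm10, hm11]; ring) hdet

lemma center_scalar14 (Z : GL (Fin 3) ℂ) (hZ : Z ∈ Subgroup.center (GL (Fin 3) ℂ)) :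
    ∃ r : ℂ, (Z : Matrix (Fin 3) (Fin 3) ℂ) = r • (1 : Matrix (Fin 3) (Fin 3) ℂ) := by
  have hcomm : Pairwise fun i j : Fin 3 =>
      Commute (single i j 1) (Z : Matrix (Fin 3) (Fin 3) ℂ) := by
    intro i j hij
    set E : Matrix (Fin 3) (Fin 3) ℂ := single i j 1 with hE
    have hE2 : E * E = 0 := by
      exact single_mul_single_of_ne 1 i j i hij.symm 1
    have hmul : (1 + E) * (1 - E) = 1 := by
      rw [mul_sub, add_mul, add_mul, one_mul, mul_one, hE2]; simp
    have hmul' : (1 - E) * (1 + E) = 1 := by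
      rw [sub_mul, mul_add, mul_add, one_mul, mul_one, hE2]; simp
    set T : GL (Fin 3) ℂ := ⟨1 + E, 1 - E, hmul, hmul'⟩ with hT
    have := Subgroup.mem_center_iff.mp hZ T
    have hval := congrArg Units.val this
    simp only [Units.val_mul, hT] at hval
    have : (Z : Matrix (Fin 3) (Fin 3) ℂ) * E = E * (Z : Matrix (Fin 3) (Fin 3) ℂ) := by
      have h2 : (1 + E) * (Z : Matrix (Fin 3) (Fin 3) ℂ)
          = (Z : Matrix (Fin 3) (Fin 3) ℂ) * (1 + E) := hval
      rw [add_mul, mul_add, one_mul, mul_one] at h2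
      exact (add_left_cancel h2).symm
    exact this.symm
  obtain ⟨r, hr⟩ := mem_range_scalar_of_commute_single hcomm
  exact ⟨r, by rw [← hr, Matrix.scalar_apply, Matrix.smul_one_eq_diagonal]⟩

/-- From commutation in `PGL₃` extract a scalar relation on matrices. -/
lemma comm_scalar14 (X M : GL (Fin 3) ℂ)
    (h : QuotientGroup.mk' (Subgroup.center (GL (Fin 3) ℂ)) X *
          QuotientGroup.mk' (Subgroup.center (GL (Fin 3) ℂ)) M =
        QuotientGroup.mk' (Subgroup.center (GL (Fin 3) ℂ)) M *
          QuotientGroup.mk' (Subgroup.center (GL (Fin 3) ℂ)) X) :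
    ∃ r : ℂ, (X : Matrix (Fin 3) (Fin 3) ℂ) * (M : Matrix (Fin 3) (Fin 3) ℂ) =
      r • ((M : Matrix (Fin 3) (Fin 3) ℂ) * (X : Matrix (Fin 3) (Fin 3) ℂ)) := by
  have h' : QuotientGroup.mk' (Subgroup.center (GL (Fin 3) ℂ)) (X * M) =
      QuotientGroup.mk' (Subgroup.center (GL (Fin 3) ℂ)) (M * X) := by
    rw [_root_.map_mul, _root_.map_mul]; exact h
  obtain ⟨z, hz, hzeq⟩ := (QuotientGroup.mk'_eq_mk' _).mp h'
  obtain ⟨ρ, hρ⟩ := center_scalar14 z hz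
  have hval := congrArg Units.val hzeq
  simp only [Units.val_mul] at hval
  rw [hρ] at hval
  have hval' : ρ • ((X : Matrix (Fin 3) (Fin 3) ℂ) * (M : Matrix (Fin 3) (Fin 3) ℂ))
      = (M : Matrix (Fin 3) (Fin 3) ℂ) * (X : Matrix (Fin 3) (Fin 3) ℂ) := by
    rw [← hval, mul_smul_comm, mul_one]
  have hρ0 : ρ ≠ 0 := by
    rintro rfl
    have : IsUnit (z : Matrix (Fin 3) (Fin 3) ℂ) := z.isUnit
    rw [hρ] at this
    simp at this
  exact ⟨ρ⁻¹, ((inv_smul_eq_iff₀ hρ0).mpr hval'.symm).symm⟩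

/-- For `c ∈ ℂˣ`, `c ≠ 1`, `A = [[0,1,0],[1,0,0],[0,0,c]]` and
`B = [[-1,0,0],[0,1,0],[0,0,c]]`, the intersection in `PGL₃(ℂ)` of the centralizers of
`[A]` and `[B]` is the image of `{diag(x,x,y) : x, y ∈ ℂˣ}`, and it is connected (so the
associated component group is trivial). -/
theorem stmt14 (c : ℂ) (hc : c ≠ 0) (hc1 : c ≠ 1)
    (A B : GL (Fin 3) ℂ)
    (hA : (A : Matrix (Fin 3) (Fin 3) ℂ) = !![0, 1, 0; 1, 0, 0; 0, 0, c])
    (hB : (B : Matrix (Fin 3) (Fin 3) ℂ) = !![-1, 0, 0; 0, 1, 0; 0, 0, c]) :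
    ((Subgroup.centralizer {QuotientGroup.mk' (Subgroup.center (GL (Fin 3) ℂ)) A} ⊓
        Subgroup.centralizer {QuotientGroup.mk' (Subgroup.center (GL (Fin 3) ℂ)) B} :
        Subgroup ((GL (Fin 3) ℂ) ⧸ Subgroup.center (GL (Fin 3) ℂ))) :
        Set ((GL (Fin 3) ℂ) ⧸ Subgroup.center (GL (Fin 3) ℂ))) =
      (QuotientGroup.mk' (Subgroup.center (GL (Fin 3) ℂ))) ''
        {X : GL (Fin 3) ℂ | ∃ x y : ℂ, x ≠ 0 ∧ y ≠ 0 ∧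
          (X : Matrix (Fin 3) (Fin 3) ℂ) = Matrix.diagonal ![x, x, y]} ∧
    IsConnected
      ((Subgroup.centralizer {QuotientGroup.mk' (Subgroup.center (GL (Fin 3) ℂ)) A} ⊓
        Subgroup.centralizer {QuotientGroup.mk' (Subgroup.center (GL (Fin 3) ℂ)) B} :
        Subgroup ((GL (Fin 3) ℂ) ⧸ Subgroup.center (GL (Fin 3) ℂ))) :
        Set ((GL (Fin 3) ℂ) ⧸ Subgroup.center (GL (Fin 3) ℂ))) := by
  -- main set equality
  -- commutation of diagonal matrices with A and B
  have hdiagA : ∀ X : GL (Fin 3) ℂ, ∀ x y : ℂ,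
      (X : Matrix (Fin 3) (Fin 3) ℂ) = Matrix.diagonal ![x, x, y] → X * A = A * X := by
    intro X x y hX
    apply Units.ext
    show (X : Matrix (Fin 3) (Fin 3) ℂ) * A = (A : Matrix (Fin 3) (Fin 3) ℂ) * X
    rw [hX, hA]
    ext i j
    fin_cases i <;> fin_cases j <;>
      simp [Matrix.mul_apply, Fin.sum_univ_three, Matrix.diagonal, Matrix.vecHead, Matrix.vecTail, mul_comm]
  have hdiagB : ∀ X : GL (Fin 3) ℂ, ∀ x y : ℂ,
      (X : Matrix (Fin 3) (Fin 3) ℂ) = Matrix.diagonal ![x, x, y] → X * B = B * X := by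
    intro X x y hX
    apply Units.ext
    show (X : Matrix (Fin 3) (Fin 3) ℂ) * B = (B : Matrix (Fin 3) (Fin 3) ℂ) * X
    rw [hX, hB]
    ext i j
    fin_cases i <;> fin_cases j <;>
      simp [Matrix.mul_apply, Fin.sum_univ_three, Matrix.diagonal, Matrix.vecHead, Matrix.vecTail, mul_comm]
  have hset : ((Subgroup.centralizer {QuotientGroup.mk' (Subgroup.center (GL (Fin 3) ℂ)) A} ⊓ Subgroup.centralizer {QuotientGroup.mk' (Subgroup.center (GL (Fin 3) ℂ)) B} :
      Subgroup ((GL (Fin 3) ℂ) ⧸ Subgroup.center (GL (Fin 3) ℂ))) : Set ((GL (Fin 3) ℂ) ⧸ Subgroup.center (GL (Fin 3) ℂ))) =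
      QuotientGroup.mk' (Subgroup.center (GL (Fin 3) ℂ)) '' {X : GL (Fin 3) ℂ | ∃ x y : ℂ, x ≠ 0 ∧ y ≠ 0 ∧
        (X : Matrix (Fin 3) (Fin 3) ℂ) = Matrix.diagonal ![x, x, y]} := by
    ext q
    constructor
    · intro hq
      obtain ⟨X, rfl⟩ := QuotientGroup.mk'_surjective (Subgroup.center (GL (Fin 3) ℂ)) q
      have hq' := SetLike.mem_coe.mp hq
      have h1 := (Subgroup.mem_inf.mp hq').1
      have h2 := (Subgroup.mem_inf.mp hq').2
      have hA' := Subgroup.mem_centralizer_singleton_iff.mp h1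
      have hB' := Subgroup.mem_centralizer_singleton_iff.mp h2
      obtain ⟨r, hr⟩ := comm_scalar14 X A hA'
      obtain ⟨s, hs⟩ := comm_scalar14 X B hB'
      rw [hA] at hr
      rw [hB] at hs
      have hdet : ((X : Matrix (Fin 3) (Fin 3) ℂ)).det ≠ 0 :=
        ((Matrix.isUnit_iff_isUnit_det _).mp X.isUnit).ne_zero
      obtain ⟨x, y, hx, hy, hm⟩ := key14 c r s hc hc1 _ hdet hr hs
      exact ⟨X, ⟨x, y, hx, hy, hm⟩, rfl⟩
    · rintro ⟨X, ⟨x, y, hx, hy, hm⟩, rfl⟩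
      apply SetLike.mem_coe.mpr
      rw [Subgroup.mem_inf]
      constructor
      · apply Subgroup.mem_centralizer_singleton_iff.mpr
        rw [← _root_.map_mul, ← _root_.map_mul, hdiagA X x y hm]
      · apply Subgroup.mem_centralizer_singleton_iff.mpr
        rw [← _root_.map_mul, ← _root_.map_mul, hdiagB X x y hm]
  refine ⟨hset, ?_⟩
  rw [hset]
  -- connectedness
  have hconn0 : IsConnected {z : ℂ | z ≠ 0} := by
    have : ({0}ᶜ : Set ℂ) = {z : ℂ | z ≠ 0} := by ext z; simp
    rw [← this]
    apply Set.Countable.isConnected_compl_of_one_lt_rank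
    · rw [Complex.rank_real_complex]; norm_num
    · exact Set.countable_singleton 0
  have hT : IsConnected ({z : ℂ | z ≠ 0} ×ˢ {z : ℂ | z ≠ 0}) := hconn0.prod hconn0
  set T : Set (ℂ × ℂ) := {z : ℂ | z ≠ 0} ×ˢ {z : ℂ | z ≠ 0} with hTdef
  have hTmem : ∀ p : T, p.val.1 ≠ 0 ∧ p.val.2 ≠ 0 := fun p => p.prop
  set f : T → GL (Fin 3) ℂ := fun p => diagGL14 p.val.1 p.val.2 (hTmem p).1 (hTmem p).2 with hf
  have hcf : Continuous f := by
    apply Units.continuous_iff.mpr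
    constructor
    · show Continuous fun p : T => Matrix.diagonal ![p.val.1, p.val.1, p.val.2]
      apply Continuous.matrix_diagonal
      apply continuous_pi
      intro i
      fin_cases i
      · exact continuous_fst.comp continuous_subtype_val
      · exact continuous_fst.comp continuous_subtype_val
      · exact continuous_snd.comp continuous_subtype_val
    · show Continuous fun p : T => Matrix.diagonal ![(p.val.1)⁻¹, (p.val.1)⁻¹, (p.val.2)⁻¹]
      apply Continuous.matrix_diagonal
      apply continuous_pi
      intro i
      fin_cases i
      · exact (continuous_fst.comp continuous_subtype_val).inv₀ fun p => (hTmem p).1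
      · exact (continuous_fst.comp continuous_subtype_val).inv₀ fun p => (hTmem p).1
      · exact (continuous_snd.comp continuous_subtype_val).inv₀ fun p => (hTmem p).2
  have hrange : QuotientGroup.mk' (Subgroup.center (GL (Fin 3) ℂ)) '' {X : GL (Fin 3) ℂ | ∃ x y : ℂ, x ≠ 0 ∧ y ≠ 0 ∧
      (X : Matrix (Fin 3) (Fin 3) ℂ) = Matrix.diagonal ![x, x, y]} =
      Set.range (fun p => QuotientGroup.mk' (Subgroup.center (GL (Fin 3) ℂ)) (f p)) := by
    ext q
    constructor
    · rintro ⟨X, ⟨x, y, hx, hy, hm⟩, rfl⟩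
      refine ⟨⟨(x, y), ⟨hx, hy⟩⟩, ?_⟩
      show QuotientGroup.mk' (Subgroup.center (GL (Fin 3) ℂ)) (f _) = QuotientGroup.mk' (Subgroup.center (GL (Fin 3) ℂ)) X
      congr 1
      apply Units.ext
      exact hm.symm
    · rintro ⟨p, rfl⟩
      exact ⟨f p, ⟨p.val.1, p.val.2, (hTmem p).1, (hTmem p).2, rfl⟩, rfl⟩
  rw [hrange]
  have : ConnectedSpace T := isConnected_iff_connectedSpace.mp hT
  exact isConnected_range (QuotientGroup.continuous_mk.comp hcf)
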